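/- Let μ be an ε-product probability measure on V = V₁×⋯×V_k and let f,g : V → ℝ (approximate Parseval). Then |⟨f,g⟩ − Σ_{S⊆[k]} ⟨f^{=S}, g^{=S}⟩| ≤ 2^{4k}·ε·‖f‖₂·‖g‖₂. Moreover, if f is a T-junta (f(x) depends only on x_T), then |⟨f,g⟩ − Σ_{S⊆T} ⟨f^{=S}, g^{=S}⟩| ≤ 2^{4|T|}·ε·‖f‖₂·‖g‖₂. -/

import Mathlib

open Finset

namespace GLL

variable {k : ℕ} {V : Fin k → Type} [∀ i, Fintype (V i)] [∀ i, DecidableEq (V i)]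

/-- Expectation of `f` with respect to the (finitely supported) measure `μ`. -/
def expect (μ f : (∀ i, V i) → ℝ) : ℝ := ∑ x, μ x * f x

/-- `μ` is a probability measure. -/
def IsProb (μ : (∀ i, V i) → ℝ) : Prop := (∀ x, 0 ≤ μ x) ∧ ∑ x, μ x = 1

/-- The marginal `μ_S` evaluated at (the `S`-coordinates of) `x`. -/
def marg (μ : (∀ i, V i) → ℝ) (S : Finset (Fin k)) (x : ∀ i, V i) : ℝ :=
  ∑ z, if ∀ i ∈ S, z i = x i then μ z else 0

/-- The link (conditional) measure `μ_x` for `x ∈ V_S`, viewed as a measure on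
full points agreeing with `x` on `S`. -/
noncomputable def cond (μ : (∀ i, V i) → ℝ) (S : Finset (Fin k)) (x z : ∀ i, V i) : ℝ :=
  if ∀ i ∈ S, z i = x i then μ z / marg μ S x else 0

/-- The averaging operator `A_S`: `A_S f (x) = E_{y ∼ μ_{x_S}} [f(x_S, y)]`.
Applied to an `S'`-junta `f`, this is also the operator `A_{S',S}`. -/
noncomputable def Aop (μ : (∀ i, V i) → ℝ) (S : Finset (Fin k)) (f : (∀ i, V i) → ℝ)
    (x : ∀ i, V i) : ℝ :=
  ∑ z, cond μ S x z * f z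

/-- The Efron–Stein component `f^{=S} = ∑_{T ⊆ S} (-1)^{|S∖T|} A_T f`. -/
noncomputable def ES (μ : (∀ i, V i) → ℝ) (S : Finset (Fin k)) (f : (∀ i, V i) → ℝ)
    (x : ∀ i, V i) : ℝ :=
  ∑ T ∈ S.powerset, (-1 : ℝ) ^ (S.card - T.card) * Aop μ T f x

/-- The low-degree part `f^{≤ d} = ∑_{|S| ≤ d} f^{=S}`. -/
noncomputable def lowPart (μ : (∀ i, V i) → ℝ) (d : ℕ) (f : (∀ i, V i) → ℝ)
    (x : ∀ i, V i) : ℝ :=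
  ∑ S ∈ univ.powerset.filter (fun S : Finset (Fin k) => S.card ≤ d), ES μ S f x

/-- The Laplacian `L_S[f] = ∑_{T ⊇ S} f^{=T}`. -/
noncomputable def Lap (μ : (∀ i, V i) → ℝ) (S : Finset (Fin k)) (f : (∀ i, V i) → ℝ)
    (x : ∀ i, V i) : ℝ :=
  ∑ T ∈ univ.powerset.filter (fun T : Finset (Fin k) => S ⊆ T), ES μ T f x

/-- The truncated Laplacian `L_S^{≤d}[f] = ∑_{T ⊇ S, |T| ≤ d} f^{=T}`. -/
noncomputable def LapLe (μ : (∀ i, V i) → ℝ) (d : ℕ) (S : Finset (Fin k))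
    (f : (∀ i, V i) → ℝ) (x : ∀ i, V i) : ℝ :=
  ∑ T ∈ univ.powerset.filter (fun T : Finset (Fin k) => S ⊆ T ∧ T.card ≤ d), ES μ T f x

/-- The influence `I_{S,x}[f] = ‖L_S[f](x,·)‖²_{L²(μ_x)}`. -/
noncomputable def Inf (μ : (∀ i, V i) → ℝ) (S : Finset (Fin k)) (f : (∀ i, V i) → ℝ)
    (x : ∀ i, V i) : ℝ :=
  ∑ z, cond μ S x z * (Lap μ S f z) ^ 2

/-- The truncated influence `I^{≤d}_{S,x}[f] = ‖L_S^{≤d}[f](x,·)‖²_{L²(μ_x)}`. -/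
noncomputable def InfLe (μ : (∀ i, V i) → ℝ) (d : ℕ) (S : Finset (Fin k))
    (f : (∀ i, V i) → ℝ) (x : ∀ i, V i) : ℝ :=
  ∑ z, cond μ S x z * (LapLe μ d S f z) ^ 2

/-- `‖f‖₂²` with respect to `μ`. -/
def normSq (μ f : (∀ i, V i) → ℝ) : ℝ := ∑ x, μ x * (f x) ^ 2

/-- `‖f‖₄⁴` with respect to `μ`. -/
def norm4p4 (μ f : (∀ i, V i) → ℝ) : ℝ := ∑ x, μ x * (f x) ^ 4

/-- `‖f‖₂` with respect to `μ`. -/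
noncomputable def l2norm (μ f : (∀ i, V i) → ℝ) : ℝ := Real.sqrt (normSq μ f)

/-- `‖f‖_∞`: the maximum of `|f|` over the support of `μ`. -/
noncomputable def supNorm (μ f : (∀ i, V i) → ℝ) : ℝ :=
  sSup ((fun x => |f x|) '' {x | 0 < μ x})

/-- Inner product `⟨f, g⟩ = E_{x∼μ}[f(x) g(x)]`. -/
def inner' (μ f g : (∀ i, V i) → ℝ) : ℝ := ∑ x, μ x * (f x * g x)

/-- The pair `{i,j}`-skeleton of `μ` is `ε`-pseudorandom. -/
def PairPseudo (μ : (∀ i, V i) → ℝ) (ε : ℝ) (i j : Fin k) : Prop :=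
  ∀ (f₁ : V i → ℝ) (f₂ : V j → ℝ),
    |expect μ (fun x => f₁ (x i) * f₂ (x j)) -
        expect μ (fun x => f₁ (x i)) * expect μ (fun x => f₂ (x j))| ≤
      ε * Real.sqrt
        ((expect μ (fun x => f₁ (x i) ^ 2) - expect μ (fun x => f₁ (x i)) ^ 2) *
          (expect μ (fun x => f₂ (x j) ^ 2) - expect μ (fun x => f₂ (x j)) ^ 2))

/-- `μ` is an `ε`-product measure: every link of every restriction of size `≤ k - 2`
has `ε`-pseudorandom skeletons. -/
def EpsProduct (μ : (∀ i, V i) → ℝ) (ε : ℝ) : Prop :=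
  ∀ S : Finset (Fin k), S.card ≤ k - 2 → ∀ x, 0 < marg μ S x →
    ∀ i j : Fin k, i ∉ S → j ∉ S → i ≠ j → PairPseudo (cond μ S x) ε i j

/-- `‖f(x,·)‖_{L²(μ_x)}` for `x ∈ V_S`. -/
noncomputable def restrictNorm (μ : (∀ i, V i) → ℝ) (S : Finset (Fin k)) (x : ∀ i, V i)
    (f : (∀ i, V i) → ℝ) : ℝ :=
  Real.sqrt (∑ z, cond μ S x z * (f z) ^ 2)

/-- `f` is `(d, δ)`-global: all restrictions of at most `d` coordinates have
`2`-norm at most `δ`. -/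
def IsGlobal (μ : (∀ i, V i) → ℝ) (d : ℕ) (δ : ℝ) (f : (∀ i, V i) → ℝ) : Prop :=
  ∀ S : Finset (Fin k), S.card ≤ d → ∀ x, 0 < marg μ S x → restrictNorm μ S x f ≤ δ

/-- `f` is an `S`-junta: it depends only on the coordinates in `S`. -/
def Junta (S : Finset (Fin k)) (f : (∀ i, V i) → ℝ) : Prop :=
  ∀ x y, (∀ i ∈ S, x i = y i) → f x = f y

/-- The noise operator `T_ρ f = ∑_{S ⊆ [k]} ρ^{|S|} (1-ρ)^{k-|S|} A_S f`. -/
noncomputable def noiseOp (μ : (∀ i, V i) → ℝ) (ρ : ℝ) (f : (∀ i, V i) → ℝ)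
    (x : ∀ i, V i) : ℝ :=
  ∑ S ∈ (univ : Finset (Fin k)).powerset, ρ ^ S.card * (1 - ρ) ^ (k - S.card) * Aop μ S f x

/-- The up-down walk operator `T = (1/k) ∑_{i=1}^k A_{[k]∖{i}}`. -/
noncomputable def upDown (μ : (∀ i, V i) → ℝ) (f : (∀ i, V i) → ℝ) (x : ∀ i, V i) : ℝ :=
  (1 / (k : ℝ)) * ∑ i : Fin k, Aop μ (univ.erase i) f x

/-- The product measure `μ₁ ⊗ ⋯ ⊗ μ_k`. -/
def prodMeasure (μi : ∀ i, V i → ℝ) : (∀ i, V i) → ℝ := fun x => ∏ i, μi i (x i)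

/-- `f` has degree at most `d`: `f^{=S} = 0` whenever `|S| > d`. -/
def DegLe (μ : (∀ i, V i) → ℝ) (d : ℕ) (f : (∀ i, V i) → ℝ) : Prop :=
  ∀ S : Finset (Fin k), d < S.card → ∀ x, ES μ S f x = 0

/-- `{F S}_{S ⊆ [k]}` is an `(α, ε')`-approximate Efron–Stein decomposition of `f`. -/
noncomputable def ApproxES (μ : (∀ i, V i) → ℝ) (α ε' : ℝ) (f : (∀ i, V i) → ℝ)
    (F : Finset (Fin k) → (∀ i, V i) → ℝ) : Prop :=
  l2norm μ f ≤ α ∧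
    l2norm μ (fun x => f x - ∑ S ∈ (univ : Finset (Fin k)).powerset, F S x) ≤ ε' ∧
    ∀ S : Finset (Fin k), ∃ h : (∀ i, V i) → ℝ,
      l2norm μ h ≤ α ∧ l2norm μ (fun x => ES μ S h x - F S x) ≤ ε'

section Aux

variable {μ : (∀ i, V i) → ℝ} {S T : Finset (Fin k)} {x y z w : ∀ i, V i}
  {f g φ ψ : (∀ i, V i) → ℝ} {ε : ℝ}

lemma marg_nonneg (hμ0 : ∀ x, 0 ≤ μ x) (S : Finset (Fin k)) (x : ∀ i, V i) :
    0 ≤ marg μ S x :=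
  Finset.sum_nonneg fun z _ => by split_ifs; exacts [hμ0 z, le_rfl]

lemma mu_le_marg (hμ0 : ∀ x, 0 ≤ μ x) (S : Finset (Fin k)) (x : ∀ i, V i) :
    μ x ≤ marg μ S x := by
  have := Finset.single_le_sum (f := fun z => if ∀ i ∈ S, z i = x i then μ z else 0)
    (fun z _ => by split_ifs; exacts [hμ0 z, le_rfl]) (Finset.mem_univ x)
  simpa [marg] using this

lemma marg_pos (hμ0 : ∀ x, 0 ≤ μ x) (hx : 0 < μ x) : 0 < marg μ S x :=
  lt_of_lt_of_le hx (mu_le_marg hμ0 S x)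

lemma marg_congr (μ : (∀ i, V i) → ℝ) (hxy : ∀ i ∈ S, x i = y i) :
    marg μ S x = marg μ S y := by
  unfold marg
  refine Finset.sum_congr rfl fun z _ => ?_
  exact if_congr ⟨fun H i hi => (H i hi).trans (hxy i hi),
    fun H i hi => (H i hi).trans (hxy i hi).symm⟩ rfl rfl

lemma cond_nonneg (hμ0 : ∀ x, 0 ≤ μ x) (S : Finset (Fin k)) (x z : ∀ i, V i) :
    0 ≤ cond μ S x z := by
  unfold cond; split_ifs with h
  · exact div_nonneg (hμ0 z) (marg_nonneg hμ0 S x)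
  · exact le_rfl

lemma cond_pos_eq (h : ∀ i ∈ S, z i = x i) : cond μ S x z = μ z / marg μ S x := by
  unfold cond; exact if_pos h

lemma cond_neg_eq (h : ¬ ∀ i ∈ S, z i = x i) : cond μ S x z = 0 := by
  unfold cond; exact if_neg h

lemma sum_cond (h : marg μ S x ≠ 0) : ∑ z, cond μ S x z = 1 := by
  have h1 : ∑ z, cond μ S x z
      = (∑ z, if ∀ i ∈ S, z i = x i then μ z else 0) / marg μ S x := by
    rw [Finset.sum_div]
    refine Finset.sum_congr rfl fun z _ => ?_
    unfold cond; split_ifs <;> simp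
  rw [h1]
  exact div_self h

lemma cond_zero_of_marg_zero (hm : marg μ S x = 0) (z : ∀ i, V i) : cond μ S x z = 0 := by
  unfold cond; split_ifs
  · rw [hm, div_zero]
  · rfl

lemma mu_cond_symm (μ : (∀ i, V i) → ℝ) (S : Finset (Fin k)) (x z : ∀ i, V i) :
    μ x * cond μ S x z = μ z * cond μ S z x := by
  unfold cond
  by_cases h : ∀ i ∈ S, z i = x i
  · have h' : ∀ i ∈ S, x i = z i := fun i hi => (h i hi).symm
    rw [if_pos h, if_pos h', marg_congr μ h']
    ring
  · have h' : ¬ ∀ i ∈ S, x i = z i := fun H => h fun i hi => (H i hi).symm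
    rw [if_neg h, if_neg h']; ring

lemma Aop_adjoint (μ : (∀ i, V i) → ℝ) (S : Finset (Fin k)) (f g : (∀ i, V i) → ℝ) :
    inner' μ (Aop μ S f) g = inner' μ f (Aop μ S g) := by
  have L : ∀ x, μ x * (Aop μ S f x * g x) = ∑ z, (μ z * cond μ S z x) * (f z * g x) := by
    intro x; unfold Aop; rw [Finset.sum_mul, Finset.mul_sum]
    exact Finset.sum_congr rfl fun z _ => by rw [← mu_cond_symm]; ring
  have R : ∀ x, μ x * (f x * Aop μ S g x) = ∑ z, (μ x * cond μ S x z) * (f x * g z) := by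
    intro x; unfold Aop; rw [Finset.mul_sum, Finset.mul_sum]
    exact Finset.sum_congr rfl fun z _ => by ring
  unfold inner'
  calc ∑ x, μ x * (Aop μ S f x * g x)
      = ∑ x, ∑ z, (μ z * cond μ S z x) * (f z * g x) :=
        Finset.sum_congr rfl fun x _ => L x
    _ = ∑ z, ∑ x, (μ z * cond μ S z x) * (f z * g x) := Finset.sum_comm
    _ = ∑ x, μ x * (f x * Aop μ S g x) := Finset.sum_congr rfl fun z _ => (R z).symm

lemma expect_Aop (hμ : IsProb μ) (S : Finset (Fin k)) (φ : (∀ i, V i) → ℝ) :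
    ∑ x, μ x * Aop μ S φ x = ∑ x, μ x * φ x := by
  calc ∑ x, μ x * Aop μ S φ x
      = ∑ x, ∑ z, (μ z * cond μ S z x) * φ z := by
        refine Finset.sum_congr rfl fun x _ => ?_
        unfold Aop; rw [Finset.mul_sum]
        exact Finset.sum_congr rfl fun z _ => by rw [← mu_cond_symm]; ring
    _ = ∑ z, ∑ x, (μ z * cond μ S z x) * φ z := Finset.sum_comm
    _ = ∑ z, μ z * φ z := by
        refine Finset.sum_congr rfl fun z _ => ?_
        rcases eq_or_lt_of_le (hμ.1 z) with h0 | h0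
        · simp [← h0]
        · have hs : ∑ x, cond μ S z x = 1 := sum_cond (ne_of_gt (marg_pos hμ.1 h0))
          calc ∑ x, (μ z * cond μ S z x) * φ z
              = (μ z * φ z) * ∑ x, cond μ S z x := by
                rw [Finset.mul_sum]; exact Finset.sum_congr rfl fun x _ => by ring
            _ = μ z * φ z := by rw [hs, mul_one]

lemma cond_comp (hμ0 : ∀ x, 0 ≤ μ x) (hST : S ⊆ T) (x w : ∀ i, V i) :
    ∑ z, cond μ S x z * cond μ T z w = cond μ S x w := by
  by_cases hw : ∀ i ∈ S, w i = x i
  · by_cases hμw : μ w = 0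
    · rw [show cond μ S x w = 0 by rw [cond_pos_eq hw, hμw, zero_div]]
      refine Finset.sum_eq_zero fun z _ => ?_
      have : cond μ T z w = 0 := by
        unfold cond; split_ifs
        · rw [hμw, zero_div]
        · rfl
      rw [this, mul_zero]
    · have hmw : 0 < marg μ T w := marg_pos hμ0 ((hμ0 w).lt_of_ne (Ne.symm hμw))
      have key : ∀ z, cond μ S x z * cond μ T z w =
          (if ∀ i ∈ T, w i = z i then μ z else 0) *
            (μ w / (marg μ S x * marg μ T w)) := by
        intro z
        unfold cond
        by_cases h2 : ∀ i ∈ T, w i = z i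
        · have h1 : ∀ i ∈ S, z i = x i := fun i hi =>
            (h2 i (hST hi)).symm.trans (hw i hi)
          have hmz : marg μ T z = marg μ T w :=
            (marg_congr μ fun i hi => h2 i hi).symm
          rw [if_pos h1, if_pos h2, if_pos h2, hmz, div_mul_div_comm, mul_div_assoc]
        · rw [if_neg h2, if_neg h2, mul_zero, zero_mul]
      calc ∑ z, cond μ S x z * cond μ T z w
          = (∑ z, if ∀ i ∈ T, w i = z i then μ z else 0) *
              (μ w / (marg μ S x * marg μ T w)) := by
            rw [Finset.sum_mul]; exact Finset.sum_congr rfl fun z _ => key z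
        _ = marg μ T w * (μ w / (marg μ S x * marg μ T w)) := by
            congr 1
            unfold marg
            exact Finset.sum_congr rfl fun z _ =>
              if_congr ⟨fun H i hi => (H i hi).symm, fun H i hi => (H i hi).symm⟩ rfl rfl
        _ = μ w / marg μ S x := by
            by_cases hmS : marg μ S x = 0
            · simp [hmS]
            · field_simp
        _ = cond μ S x w := (cond_pos_eq hw).symm
  · rw [cond_neg_eq hw]
    refine Finset.sum_eq_zero fun z _ => ?_
    by_cases h1 : ∀ i ∈ S, z i = x i
    · have h2 : ¬ ∀ i ∈ T, w i = z i := fun H =>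
        hw fun i hi => (H i (hST hi)).trans (h1 i hi)
      rw [show cond μ T z w = 0 from cond_neg_eq h2, mul_zero]
    · rw [cond_neg_eq h1, zero_mul]

lemma Aop_tower (hμ0 : ∀ x, 0 ≤ μ x) (hST : S ⊆ T) (f : (∀ i, V i) → ℝ) (x : ∀ i, V i) :
    Aop μ S (Aop μ T f) x = Aop μ S f x := by
  unfold Aop
  calc ∑ z, cond μ S x z * ∑ w, cond μ T z w * f w
      = ∑ z, ∑ w, cond μ S x z * cond μ T z w * f w := by
        refine Finset.sum_congr rfl fun z _ => ?_
        rw [Finset.mul_sum]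
        exact Finset.sum_congr rfl fun w _ => (mul_assoc _ _ _).symm
    _ = ∑ w, (∑ z, cond μ S x z * cond μ T z w) * f w := by
        rw [Finset.sum_comm]
        exact Finset.sum_congr rfl fun w _ => (Finset.sum_mul _ _ _).symm
    _ = ∑ w, cond μ S x w * f w :=
        Finset.sum_congr rfl fun w _ => by rw [cond_comp hμ0 hST]

lemma junta_mono (hST : S ⊆ T) (hf : Junta S f) : Junta T f :=
  fun x y hxy => hf x y fun i hi => hxy i (hST hi)

lemma Aop_junta (μ : (∀ i, V i) → ℝ) (S : Finset (Fin k)) (f : (∀ i, V i) → ℝ) :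
    Junta S (Aop μ S f) := by
  intro x y hxy
  unfold Aop
  refine Finset.sum_congr rfl fun z _ => ?_
  unfold cond
  rw [marg_congr μ hxy]
  congr 1
  exact if_congr ⟨fun H i hi => (H i hi).trans (hxy i hi),
    fun H i hi => (H i hi).trans (hxy i hi).symm⟩ rfl rfl

lemma Aop_junta_fix (hf : Junta S f) (hm : marg μ S x ≠ 0) : Aop μ S f x = f x := by
  unfold Aop
  have h1 : ∀ z, cond μ S x z * f z = cond μ S x z * f x := by
    intro z; by_cases hz : ∀ i ∈ S, z i = x i
    · rw [hf z x hz]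
    · rw [cond_neg_eq hz, zero_mul, zero_mul]
  rw [Finset.sum_congr rfl fun z _ => h1 z, ← Finset.sum_mul, sum_cond hm, one_mul]

lemma Aop_pullout (hψ : Junta S ψ) (φ : (∀ i, V i) → ℝ) (x : ∀ i, V i) :
    Aop μ S (fun z => φ z * ψ z) x = Aop μ S φ x * ψ x := by
  unfold Aop; rw [Finset.sum_mul]
  refine Finset.sum_congr rfl fun z _ => ?_
  show cond μ S x z * (φ z * ψ z) = cond μ S x z * φ z * ψ x
  by_cases hz : ∀ i ∈ S, z i = x i
  · rw [hψ z x hz]; ring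
  · rw [cond_neg_eq hz]; ring

lemma Aop_sq_le (hμ0 : ∀ x, 0 ≤ μ x) (f : (∀ i, V i) → ℝ) (x : ∀ i, V i) :
    (Aop μ S f x) ^ 2 ≤ Aop μ S (fun z => f z ^ 2) x := by
  unfold Aop
  by_cases hm : marg μ S x = 0
  · simp [cond_zero_of_marg_zero hm]
  · have hsum : ∑ z, cond μ S x z = 1 := sum_cond hm
    calc (∑ z, cond μ S x z * f z) ^ 2
        = (∑ z, Real.sqrt (cond μ S x z) * (Real.sqrt (cond μ S x z) * f z)) ^ 2 := by
          congr 1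
          refine Finset.sum_congr rfl fun z _ => ?_
          rw [← mul_assoc, Real.mul_self_sqrt (cond_nonneg hμ0 S x z)]
      _ ≤ (∑ z, Real.sqrt (cond μ S x z) ^ 2) *
            ∑ z, (Real.sqrt (cond μ S x z) * f z) ^ 2 :=
          Finset.sum_mul_sq_le_sq_mul_sq _ _ _
      _ = (∑ z, cond μ S x z) * ∑ z, cond μ S x z * f z ^ 2 := by
          congr 1 <;> refine Finset.sum_congr rfl fun z _ => ?_
          · exact Real.sq_sqrt (cond_nonneg hμ0 S x z)
          · rw [mul_pow, Real.sq_sqrt (cond_nonneg hμ0 S x z)]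
      _ = ∑ z, cond μ S x z * f z ^ 2 := by rw [hsum, one_mul]

lemma weighted_cs (w a b : (∀ i, V i) → ℝ) (hw : ∀ z, 0 ≤ w z) (ha : ∀ z, 0 ≤ a z)
    (hb : ∀ z, 0 ≤ b z) :
    ∑ z, w z * (Real.sqrt (a z) * Real.sqrt (b z)) ≤
      Real.sqrt (∑ z, w z * a z) * Real.sqrt (∑ z, w z * b z) := by
  calc ∑ z, w z * (Real.sqrt (a z) * Real.sqrt (b z))
      = ∑ z, Real.sqrt (w z * a z) * Real.sqrt (w z * b z) := by
        refine Finset.sum_congr rfl fun z _ => ?_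
        rw [Real.sqrt_mul (hw z) (a z), Real.sqrt_mul (hw z) (b z)]
        linear_combination (-(Real.sqrt (a z) * Real.sqrt (b z))) * Real.mul_self_sqrt (hw z)
    _ ≤ Real.sqrt (∑ z, w z * a z) * Real.sqrt (∑ z, w z * b z) :=
        Real.sum_sqrt_mul_sqrt_le _ (fun z => mul_nonneg (hw z) (ha z))
          (fun z => mul_nonneg (hw z) (hb z))

lemma normSq_nonneg (hμ0 : ∀ x, 0 ≤ μ x) (f : (∀ i, V i) → ℝ) : 0 ≤ normSq μ f :=
  Finset.sum_nonneg fun x _ => mul_nonneg (hμ0 x) (sq_nonneg _)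

lemma l2norm_nonneg : 0 ≤ l2norm μ f := Real.sqrt_nonneg _

lemma normSq_Aop_le (hμ : IsProb μ) (S : Finset (Fin k)) (f : (∀ i, V i) → ℝ) :
    normSq μ (Aop μ S f) ≤ normSq μ f := by
  unfold normSq
  calc ∑ x, μ x * Aop μ S f x ^ 2
      ≤ ∑ x, μ x * Aop μ S (fun z => f z ^ 2) x :=
        Finset.sum_le_sum fun x _ =>
          mul_le_mul_of_nonneg_left (Aop_sq_le hμ.1 f x) (hμ.1 x)
    _ = ∑ x, μ x * f x ^ 2 := expect_Aop hμ S _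

lemma l2norm_Aop_le (hμ : IsProb μ) (S : Finset (Fin k)) (f : (∀ i, V i) → ℝ) :
    l2norm μ (Aop μ S f) ≤ l2norm μ f :=
  Real.sqrt_le_sqrt (normSq_Aop_le hμ S f)

lemma abs_inner'_le (hμ0 : ∀ x, 0 ≤ μ x) (f g : (∀ i, V i) → ℝ) :
    |inner' μ f g| ≤ l2norm μ f * l2norm μ g := by
  calc |inner' μ f g| ≤ ∑ x, |μ x * (f x * g x)| := Finset.abs_sum_le_sum_abs _ _
    _ = ∑ x, μ x * (Real.sqrt (f x ^ 2) * Real.sqrt (g x ^ 2)) := by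
        refine Finset.sum_congr rfl fun x _ => ?_
        rw [abs_mul, abs_mul, abs_of_nonneg (hμ0 x), Real.sqrt_sq_eq_abs,
          Real.sqrt_sq_eq_abs]
    _ ≤ Real.sqrt (∑ x, μ x * f x ^ 2) * Real.sqrt (∑ x, μ x * g x ^ 2) :=
        weighted_cs _ _ _ hμ0 (fun z => sq_nonneg _) (fun z => sq_nonneg _)
    _ = l2norm μ f * l2norm μ g := rfl

lemma inner'_congr_right (hμ0 : ∀ x, 0 ≤ μ x) (h : ∀ x, 0 < μ x → φ x = ψ x)
    (f : (∀ i, V i) → ℝ) : inner' μ f φ = inner' μ f ψ := by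
  unfold inner'
  refine Finset.sum_congr rfl fun x _ => ?_
  rcases eq_or_lt_of_le (hμ0 x) with h0 | h0
  · rw [← h0]; ring
  · rw [h x h0]

lemma Aop_add (μ : (∀ i, V i) → ℝ) (S : Finset (Fin k)) (p q : (∀ i, V i) → ℝ)
    (x : ∀ i, V i) :
    Aop μ S (fun z => p z + q z) x = Aop μ S p x + Aop μ S q x := by
  unfold Aop; rw [← Finset.sum_add_distrib]
  exact Finset.sum_congr rfl fun z _ => by ring

lemma Aop_nonneg (hμ0 : ∀ x, 0 ≤ μ x) (hp : ∀ z, 0 ≤ φ z) (x : ∀ i, V i) :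
    0 ≤ Aop μ S φ x :=
  Finset.sum_nonneg fun z _ => mul_nonneg (cond_nonneg hμ0 S x z) (hp z)

lemma Aop_mono (hμ0 : ∀ x, 0 ≤ μ x) (hpq : ∀ z, φ z ≤ ψ z) (x : ∀ i, V i) :
    Aop μ S φ x ≤ Aop μ S ψ x :=
  Finset.sum_le_sum fun z _ => mul_le_mul_of_nonneg_left (hpq z) (cond_nonneg hμ0 S x z)

lemma cond_ne_zero_agree (h : cond μ S x z ≠ 0) : ∀ i ∈ S, z i = x i := by
  by_contra hc; exact h (cond_neg_eq hc)

lemma cond_ne_zero_mu (h : cond μ S x z ≠ 0) : μ z ≠ 0 := by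
  intro e
  apply h
  unfold cond; split_ifs
  · rw [e, zero_div]
  · rfl

lemma cov_bound (hμ : IsProb μ) (hε : 0 ≤ ε) (hpr : EpsProduct μ ε) :
    ∀ B W : Finset (Fin k), Disjoint W B → ∀ i : Fin k, i ∉ W → i ∉ B →
      ∀ x, 0 < marg μ W x → ∀ (u : V i → ℝ) (h : (∀ i, V i) → ℝ), Junta (W ∪ B) h →
      |Aop μ W (fun z => u (z i) * h z) x -
          Aop μ W (fun z => u (z i)) x * Aop μ W h x| ≤
        B.card * ε * Real.sqrt (Aop μ W (fun z => u (z i) ^ 2) x) *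
          Real.sqrt (Aop μ W (fun z => h z ^ 2) x) := by
  intro B
  induction B using Finset.strongInduction with
  | _ B IH =>
  intro W hWB i hiW hiB x hmx u h hjunta
  rcases B.eq_empty_or_nonempty with hB | ⟨j, hj⟩
  · subst hB
    rw [Finset.union_empty] at hjunta
    rw [Aop_pullout hjunta (fun z => u (z i)) x, Aop_junta_fix hjunta (ne_of_gt hmx)]
    simp
  · -- step
    have hjW : j ∉ W := Finset.disjoint_right.mp hWB hj
    have hij : i ≠ j := fun e => hiB (by rwa [e])
    set W' : Finset (Fin k) := insert j W with hW'
    set B' : Finset (Fin k) := B.erase j with hB'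
    have hWB' : Disjoint W' B' := by
      rw [hW', Finset.disjoint_insert_left]
      exact ⟨Finset.notMem_erase j B, Finset.disjoint_of_subset_right (Finset.erase_subset j B) hWB⟩
    have hiW' : i ∉ W' := by
      rw [hW', Finset.mem_insert]; push_neg; exact ⟨hij, hiW⟩
    have hiB' : i ∉ B' := fun hm => hiB (Finset.mem_of_mem_erase hm)
    have hsubset : W ∪ B ⊆ W' ∪ B' := by
      intro a ha
      rcases Finset.mem_union.mp ha with ha | ha
      · exact Finset.mem_union_left _ (Finset.mem_insert_of_mem ha)
      · by_cases haj : a = j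
        · exact Finset.mem_union_left _ (haj ▸ Finset.mem_insert_self j W)
        · exact Finset.mem_union_right _ (Finset.mem_erase.mpr ⟨haj, ha⟩)
    have hjunta' : Junta (W' ∪ B') h := junta_mono hsubset hjunta
    have hWsub : W ⊆ W' := Finset.subset_insert j W
    have htow : ∀ p : (∀ i, V i) → ℝ, Aop μ W (Aop μ W' p) x = Aop μ W p x :=
      fun p => Aop_tower hμ.1 hWsub p x
    set hbar : (∀ i, V i) → ℝ := Aop μ W' h with hhbar
    have hjbar : Junta W' hbar := Aop_junta μ W' h
    set CT : (∀ i, V i) → ℝ := fun z =>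
      Aop μ W' (fun w => u (w i) * h w) z - Aop μ W' (fun w => u (w i)) z * hbar z
      with hCT
    -- the main decomposition
    have e1 : Aop μ W h x = Aop μ W hbar x := (htow h).symm
    have e2 : Aop μ W (fun z => u (z i) * h z) x =
        Aop μ W CT x + Aop μ W (fun z => u (z i) * hbar z) x := by
      have p2 : Aop μ W (fun z => u (z i) * hbar z) x =
          Aop μ W (fun z => Aop μ W' (fun w => u (w i)) z * hbar z) x := by
        rw [← htow (fun z => u (z i) * hbar z)]
        exact congrArg (fun F => Aop μ W F x)
          (funext fun z => Aop_pullout hjbar (fun w => u (w i)) z)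
      rw [p2, ← Aop_add, ← htow (fun z => u (z i) * h z)]
      exact congrArg (fun F => Aop μ W F x) (funext fun z => (sub_add_cancel _ _).symm)
    -- bound for the CT part
    have hAu2 : ∀ z, (0:ℝ) ≤ Aop μ W' (fun w => u (w i) ^ 2) z :=
      fun z => Aop_nonneg hμ.1 (fun w => sq_nonneg _) z
    have hAh2 : ∀ z, (0:ℝ) ≤ Aop μ W' (fun w => h w ^ 2) z :=
      fun z => Aop_nonneg hμ.1 (fun w => sq_nonneg _) z
    have hCTbound : ∀ z, cond μ W x z * |CT z| ≤
        cond μ W x z * (B'.card * ε *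
          (Real.sqrt (Aop μ W' (fun w => u (w i) ^ 2) z) *
           Real.sqrt (Aop μ W' (fun w => h w ^ 2) z))) := by
      intro z
      by_cases hz : cond μ W x z = 0
      · rw [hz, zero_mul, zero_mul]
      · refine mul_le_mul_of_nonneg_left ?_ (cond_nonneg hμ.1 W x z)
        have hμz : 0 < μ z := ((hμ.1 z).lt_of_ne (Ne.symm (cond_ne_zero_mu hz)))
        have hmz : 0 < marg μ W' z := marg_pos hμ.1 hμz
        have := IH B' (Finset.erase_ssubset hj) W' hWB' i hiW' hiB' z hmz u h hjunta'
        calc |CT z| ≤ B'.card * ε *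
              Real.sqrt (Aop μ W' (fun w => u (w i) ^ 2) z) *
              Real.sqrt (Aop μ W' (fun w => h w ^ 2) z) := this
          _ = B'.card * ε * (Real.sqrt (Aop μ W' (fun w => u (w i) ^ 2) z) *
              Real.sqrt (Aop μ W' (fun w => h w ^ 2) z)) := by ring
    have hterm1 : |Aop μ W CT x| ≤ B'.card * ε *
        Real.sqrt (Aop μ W (fun z => u (z i) ^ 2) x) *
        Real.sqrt (Aop μ W (fun z => h z ^ 2) x) := by
      calc |Aop μ W CT x| ≤ ∑ z, |cond μ W x z * CT z| := Finset.abs_sum_le_sum_abs _ _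
        _ = ∑ z, cond μ W x z * |CT z| := Finset.sum_congr rfl fun z _ => by
            rw [abs_mul, abs_of_nonneg (cond_nonneg hμ.1 W x z)]
        _ ≤ ∑ z, cond μ W x z * (B'.card * ε *
              (Real.sqrt (Aop μ W' (fun w => u (w i) ^ 2) z) *
               Real.sqrt (Aop μ W' (fun w => h w ^ 2) z))) :=
            Finset.sum_le_sum fun z _ => hCTbound z
        _ = B'.card * ε * ∑ z, cond μ W x z *
              (Real.sqrt (Aop μ W' (fun w => u (w i) ^ 2) z) *
               Real.sqrt (Aop μ W' (fun w => h w ^ 2) z)) := by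
            rw [Finset.mul_sum]
            exact Finset.sum_congr rfl fun z _ => by ring
        _ ≤ B'.card * ε *
              (Real.sqrt (∑ z, cond μ W x z * Aop μ W' (fun w => u (w i) ^ 2) z) *
               Real.sqrt (∑ z, cond μ W x z * Aop μ W' (fun w => h w ^ 2) z)) := by
            refine mul_le_mul_of_nonneg_left ?_ (by positivity)
            exact weighted_cs _ _ _ (cond_nonneg hμ.1 W x) hAu2 hAh2
        _ = B'.card * ε *
              Real.sqrt (Aop μ W (fun z => u (z i) ^ 2) x) *
              Real.sqrt (Aop μ W (fun z => h z ^ 2) x) := by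
            rw [show (∑ z, cond μ W x z * Aop μ W' (fun w => u (w i) ^ 2) z)
                = Aop μ W (fun z => u (z i) ^ 2) x from htow _,
              show (∑ z, cond μ W x z * Aop μ W' (fun w => h w ^ 2) z)
                = Aop μ W (fun z => h z ^ 2) x from htow _]
            ring
    -- bound for the pseudorandom part
    have hWcard : W.card ≤ k - 2 := by
      have hins : i ∉ insert j W := by
        rw [Finset.mem_insert]; push_neg; exact ⟨hij, hiW⟩
      have hc : (insert i (insert j W)).card = W.card + 2 := by
        rw [Finset.card_insert_of_notMem hins, Finset.card_insert_of_notMem hjW]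
      have hle : (insert i (insert j W)).card ≤ k := by
        have := Finset.card_le_card (Finset.subset_univ (insert i (insert j W)))
        simpa using this
      omega
    have hpp := hpr W hWcard x hmx i j hiW hjW hij
    set f₂ : V j → ℝ := fun v => hbar (Function.update x j v) with hf₂def
    have hf2 : ∀ z, cond μ W x z ≠ 0 → f₂ (z j) = hbar z := by
      intro z hz
      have hag := cond_ne_zero_agree hz
      refine hjbar _ _ fun i' hi' => ?_
      rcases Finset.mem_insert.mp hi' with e | hi'
      · subst e; rw [Function.update_self]
      · rw [Function.update_of_ne (fun e => hjW (by rw [← e]; exact hi')), hag i' hi']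
    have hrw : ∀ (F : ℝ → ℝ → ℝ), (∑ z, cond μ W x z * F (u (z i)) (f₂ (z j)))
        = ∑ z, cond μ W x z * F (u (z i)) (hbar z) := by
      intro F
      refine Finset.sum_congr rfl fun z _ => ?_
      by_cases hz : cond μ W x z = 0
      · rw [hz, zero_mul, zero_mul]
      · rw [hf2 z hz]
    have hpp2 := hpp u f₂
    have hexp1 : expect (cond μ W x) (fun z => u (z i) * f₂ (z j))
        = Aop μ W (fun z => u (z i) * hbar z) x := hrw (fun a b => a * b)
    have hexp2 : expect (cond μ W x) (fun z => u (z i)) = Aop μ W (fun z => u (z i)) x := rfl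
    have hexp3 : expect (cond μ W x) (fun z => f₂ (z j)) = Aop μ W hbar x := by
      have := hrw (fun a b => b)
      exact this
    have hexp4 : expect (cond μ W x) (fun z => f₂ (z j) ^ 2)
        = Aop μ W (fun z => hbar z ^ 2) x := hrw (fun a b => b ^ 2)
    have hexp5 : expect (cond μ W x) (fun z => u (z i) ^ 2)
        = Aop μ W (fun z => u (z i) ^ 2) x := rfl
    rw [hexp1, hexp2, hexp3, hexp4, hexp5] at hpp2
    have hvar1lb : (0:ℝ) ≤ Aop μ W (fun z => u (z i) ^ 2) x - Aop μ W (fun z => u (z i)) x ^ 2 :=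
      sub_nonneg.mpr (Aop_sq_le hμ.1 (fun z => u (z i)) x)
    have hvar2lb : (0:ℝ) ≤ Aop μ W (fun z => hbar z ^ 2) x - Aop μ W hbar x ^ 2 :=
      sub_nonneg.mpr (Aop_sq_le hμ.1 hbar x)
    have hvar1ub : Aop μ W (fun z => u (z i) ^ 2) x - Aop μ W (fun z => u (z i)) x ^ 2
        ≤ Aop μ W (fun z => u (z i) ^ 2) x := by nlinarith [sq_nonneg (Aop μ W (fun z => u (z i)) x)]
    have hbarsq : Aop μ W (fun z => hbar z ^ 2) x ≤ Aop μ W (fun z => h z ^ 2) x := by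
      calc Aop μ W (fun z => hbar z ^ 2) x
          ≤ Aop μ W (fun z => Aop μ W' (fun w => h w ^ 2) z) x :=
            Aop_mono hμ.1 (fun z => Aop_sq_le hμ.1 h z) x
        _ = Aop μ W (fun z => h z ^ 2) x := htow _
    have hvar2ub : Aop μ W (fun z => hbar z ^ 2) x - Aop μ W hbar x ^ 2
        ≤ Aop μ W (fun z => h z ^ 2) x := by
      nlinarith [sq_nonneg (Aop μ W hbar x)]
    have hAu2x : (0:ℝ) ≤ Aop μ W (fun z => u (z i) ^ 2) x :=
      Aop_nonneg hμ.1 (fun w => sq_nonneg _) x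
    have hAh2x : (0:ℝ) ≤ Aop μ W (fun z => h z ^ 2) x :=
      Aop_nonneg hμ.1 (fun w => sq_nonneg _) x
    have hterm2 : |Aop μ W (fun z => u (z i) * hbar z) x -
        Aop μ W (fun z => u (z i)) x * Aop μ W hbar x| ≤
        ε * (Real.sqrt (Aop μ W (fun z => u (z i) ^ 2) x) *
             Real.sqrt (Aop μ W (fun z => h z ^ 2) x)) := by
      refine le_trans hpp2 ?_
      refine mul_le_mul_of_nonneg_left ?_ hε
      rw [← Real.sqrt_mul hAu2x]
      refine Real.sqrt_le_sqrt ?_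
      exact mul_le_mul hvar1ub hvar2ub hvar2lb hAu2x
    -- combine
    have hcard : (B'.card : ℝ) + 1 = B.card := by
      rw [← Nat.cast_add_one]
      exact_mod_cast congrArg Nat.cast (Finset.card_erase_add_one hj)
    calc |Aop μ W (fun z => u (z i) * h z) x -
          Aop μ W (fun z => u (z i)) x * Aop μ W h x|
        = |Aop μ W CT x + (Aop μ W (fun z => u (z i) * hbar z) x -
            Aop μ W (fun z => u (z i)) x * Aop μ W hbar x)| := by
          rw [e2, e1]; ring_nf
      _ ≤ |Aop μ W CT x| + |Aop μ W (fun z => u (z i) * hbar z) x -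
            Aop μ W (fun z => u (z i)) x * Aop μ W hbar x| := abs_add_le _ _
      _ ≤ B'.card * ε * Real.sqrt (Aop μ W (fun z => u (z i) ^ 2) x) *
            Real.sqrt (Aop μ W (fun z => h z ^ 2) x) +
          ε * (Real.sqrt (Aop μ W (fun z => u (z i) ^ 2) x) *
               Real.sqrt (Aop μ W (fun z => h z ^ 2) x)) := add_le_add hterm1 hterm2
      _ = (B'.card + 1) * ε * Real.sqrt (Aop μ W (fun z => u (z i) ^ 2) x) *
            Real.sqrt (Aop μ W (fun z => h z ^ 2) x) := by ring
      _ = B.card * ε * Real.sqrt (Aop μ W (fun z => u (z i) ^ 2) x) *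
            Real.sqrt (Aop μ W (fun z => h z ^ 2) x) := by rw [hcard]

lemma inner'_comm (μ f g : (∀ i, V i) → ℝ) : inner' μ f g = inner' μ g f := by
  unfold inner'; exact Finset.sum_congr rfl fun x _ => by ring

lemma inner'_sum_right (μ f : (∀ i, V i) → ℝ) {α : Type} (s : Finset α)
    (G : α → (∀ i, V i) → ℝ) :
    inner' μ f (fun x => ∑ Q ∈ s, G Q x) = ∑ Q ∈ s, inner' μ f (G Q) := by
  unfold inner'
  rw [Finset.sum_comm]
  exact Finset.sum_congr rfl fun x _ => by rw [Finset.mul_sum, Finset.mul_sum]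

lemma inner'_smul_right (μ f φ : (∀ i, V i) → ℝ) (c : ℝ) :
    inner' μ f (fun x => c * φ x) = c * inner' μ f φ := by
  unfold inner'; rw [Finset.mul_sum]
  exact Finset.sum_congr rfl fun x _ => by ring

lemma inner'_sub_right (μ f φ ψ : (∀ i, V i) → ℝ) :
    inner' μ f (fun x => φ x - ψ x) = inner' μ f φ - inner' μ f ψ := by
  unfold inner'; rw [← Finset.sum_sub_distrib]
  exact Finset.sum_congr rfl fun x _ => by ring

lemma key_bound (hμ : IsProb μ) (hε : 0 ≤ ε) (hpr : EpsProduct μ ε)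
    (R Q : Finset (Fin k)) (i : Fin k) (hiR : i ∉ R) (hiQ : i ∉ Q)
    (f h : (∀ i, V i) → ℝ) (hh : Junta R h) :
    |inner' μ (fun x => Aop μ Q f x - Aop μ (insert i Q) f x) h| ≤
      R.card * ε * l2norm μ f * l2norm μ h := by
  set Q' := insert i Q with hQ'
  have hQsub : Q ⊆ Q' := Finset.subset_insert i Q
  set F := Aop μ Q' f with hF
  have hjF : Junta Q' F := Aop_junta μ Q' f
  have s1 : inner' μ (fun x => Aop μ Q f x - Aop μ Q' f x) h
      = inner' μ (Aop μ Q f) h - inner' μ (Aop μ Q' f) h := by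
    unfold inner'; rw [← Finset.sum_sub_distrib]
    exact Finset.sum_congr rfl fun x _ => by ring
  have s2 : inner' μ (Aop μ Q f) h = ∑ x, μ x * (F x * Aop μ Q h x) := by
    rw [Aop_adjoint]
    have e : inner' μ f (Aop μ Q h) = inner' μ f (Aop μ Q' (Aop μ Q h)) := by
      refine (inner'_congr_right hμ.1 ?_ f).symm
      intro x hx
      exact Aop_junta_fix (junta_mono hQsub (Aop_junta μ Q h)) (ne_of_gt (marg_pos hμ.1 hx))
    rw [e, ← Aop_adjoint]
    rfl
  have s3 : inner' μ (Aop μ Q' f) h = ∑ x, μ x * (F x * h x) := rfl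
  have s4 : ∑ x, μ x * (F x * h x) = ∑ x, μ x * Aop μ Q (fun z => F z * h z) x :=
    (expect_Aop hμ Q _).symm
  have s5 : ∑ x, μ x * (F x * Aop μ Q h x) = ∑ x, μ x * (Aop μ Q F x * Aop μ Q h x) := by
    calc ∑ x, μ x * (F x * Aop μ Q h x)
        = ∑ x, μ x * Aop μ Q (fun z => F z * Aop μ Q h z) x := (expect_Aop hμ Q _).symm
      _ = ∑ x, μ x * (Aop μ Q F x * Aop μ Q h x) :=
          Finset.sum_congr rfl fun x _ => by rw [Aop_pullout (Aop_junta μ Q h) F x]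
  -- pointwise covariance bound
  set B : Finset (Fin k) := R \ Q with hB
  have hRB : R ⊆ Q ∪ B := by
    intro a ha
    by_cases haq : a ∈ Q
    · exact Finset.mem_union_left _ haq
    · exact Finset.mem_union_right _ (Finset.mem_sdiff.mpr ⟨ha, haq⟩)
  have hdisj : Disjoint Q B := Finset.disjoint_sdiff
  have hiB : i ∉ B := fun hm => hiR (Finset.mem_sdiff.mp hm).1
  have hjh : Junta (Q ∪ B) h := junta_mono hRB hh
  have hAF2 : ∀ x, (0:ℝ) ≤ Aop μ Q (fun z => F z ^ 2) x :=
    fun x => Aop_nonneg hμ.1 (fun w => sq_nonneg _) x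
  have hAh2 : ∀ x, (0:ℝ) ≤ Aop μ Q (fun z => h z ^ 2) x :=
    fun x => Aop_nonneg hμ.1 (fun w => sq_nonneg _) x
  have hpoint : ∀ x, μ x * |Aop μ Q F x * Aop μ Q h x - Aop μ Q (fun z => F z * h z) x|
      ≤ μ x * (B.card * ε * (Real.sqrt (Aop μ Q (fun z => F z ^ 2) x) *
          Real.sqrt (Aop μ Q (fun z => h z ^ 2) x))) := by
    intro x
    rcases eq_or_lt_of_le (hμ.1 x) with h0 | h0
    · rw [← h0, zero_mul, zero_mul]
    · refine mul_le_mul_of_nonneg_left ?_ (le_of_lt h0)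
      have hmx : 0 < marg μ Q x := marg_pos hμ.1 h0
      set u : V i → ℝ := fun v => F (Function.update x i v) with hu
      have hFu : ∀ z, cond μ Q x z ≠ 0 → F z = u (z i) := by
        intro z hz
        have hag := cond_ne_zero_agree hz
        refine hjF _ _ fun i' hi' => ?_
        rcases Finset.mem_insert.mp hi' with e | hi'
        · subst e; rw [Function.update_self]
        · rw [Function.update_of_ne (fun e => hiQ (by rw [← e]; exact hi')), hag i' hi']
      have hrw : ∀ (G : ℝ → ℝ → ℝ), Aop μ Q (fun z => G (u (z i)) (h z)) x
          = Aop μ Q (fun z => G (F z) (h z)) x := by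
        intro G
        refine Finset.sum_congr rfl fun z _ => ?_
        show cond μ Q x z * G (u (z i)) (h z) = cond μ Q x z * G (F z) (h z)
        by_cases hz : cond μ Q x z = 0
        · rw [hz, zero_mul, zero_mul]
        · rw [hFu z hz]
      have cb := cov_bound hμ hε hpr B Q hdisj i hiQ hiB x hmx u h hjh
      rw [hrw (fun a b => a * b), hrw (fun a b => a), hrw (fun a b => a ^ 2)] at cb
      calc |Aop μ Q F x * Aop μ Q h x - Aop μ Q (fun z => F z * h z) x|
          = |Aop μ Q (fun z => F z * h z) x - Aop μ Q F x * Aop μ Q h x| :=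
            abs_sub_comm _ _
        _ ≤ B.card * ε * Real.sqrt (Aop μ Q (fun z => F z ^ 2) x) *
              Real.sqrt (Aop μ Q (fun z => h z ^ 2) x) := cb
        _ = B.card * ε * (Real.sqrt (Aop μ Q (fun z => F z ^ 2) x) *
              Real.sqrt (Aop μ Q (fun z => h z ^ 2) x)) := by ring
  have hmain : |inner' μ (fun x => Aop μ Q f x - Aop μ Q' f x) h| ≤
      B.card * ε * l2norm μ F * l2norm μ h := by
    rw [s1, s2, s3, s4, s5]
    calc |∑ x, μ x * (Aop μ Q F x * Aop μ Q h x) - ∑ x, μ x * Aop μ Q (fun z => F z * h z) x|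
        = |∑ x, μ x * (Aop μ Q F x * Aop μ Q h x - Aop μ Q (fun z => F z * h z) x)| := by
          rw [← Finset.sum_sub_distrib]
          congr 1
          exact Finset.sum_congr rfl fun x _ => by ring
      _ ≤ ∑ x, |μ x * (Aop μ Q F x * Aop μ Q h x - Aop μ Q (fun z => F z * h z) x)| :=
          Finset.abs_sum_le_sum_abs _ _
      _ = ∑ x, μ x * |Aop μ Q F x * Aop μ Q h x - Aop μ Q (fun z => F z * h z) x| :=
          Finset.sum_congr rfl fun x _ => by rw [abs_mul, abs_of_nonneg (hμ.1 x)]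
      _ ≤ ∑ x, μ x * (B.card * ε * (Real.sqrt (Aop μ Q (fun z => F z ^ 2) x) *
            Real.sqrt (Aop μ Q (fun z => h z ^ 2) x))) :=
          Finset.sum_le_sum fun x _ => hpoint x
      _ = B.card * ε * ∑ x, μ x * (Real.sqrt (Aop μ Q (fun z => F z ^ 2) x) *
            Real.sqrt (Aop μ Q (fun z => h z ^ 2) x)) := by
          rw [Finset.mul_sum]
          exact Finset.sum_congr rfl fun x _ => by ring
      _ ≤ B.card * ε * (Real.sqrt (∑ x, μ x * Aop μ Q (fun z => F z ^ 2) x) *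
            Real.sqrt (∑ x, μ x * Aop μ Q (fun z => h z ^ 2) x)) := by
          refine mul_le_mul_of_nonneg_left ?_ (by positivity)
          exact weighted_cs _ _ _ hμ.1 hAF2 hAh2
      _ = B.card * ε * (Real.sqrt (normSq μ F) * Real.sqrt (normSq μ h)) := by
          rw [expect_Aop hμ Q (fun z => F z ^ 2), expect_Aop hμ Q (fun z => h z ^ 2)]
          rfl
      _ = B.card * ε * l2norm μ F * l2norm μ h := by
          unfold l2norm; ring
  refine le_trans hmain ?_
  have h1 : (B.card : ℝ) ≤ R.card := by
    exact_mod_cast Finset.card_le_card (Finset.sdiff_subset)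
  have h2 : l2norm μ F ≤ l2norm μ f := l2norm_Aop_le hμ Q' f
  have hl2h : (0:ℝ) ≤ l2norm μ h := l2norm_nonneg
  have hl2F : (0:ℝ) ≤ l2norm μ F := l2norm_nonneg
  have hBc : (0:ℝ) ≤ (B.card : ℝ) := Nat.cast_nonneg _
  calc (B.card : ℝ) * ε * l2norm μ F * l2norm μ h
      ≤ (R.card : ℝ) * ε * l2norm μ F * l2norm μ h := by
        refine mul_le_mul_of_nonneg_right (mul_le_mul_of_nonneg_right
          (mul_le_mul_of_nonneg_right h1 hε) hl2F) hl2h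
    _ ≤ (R.card : ℝ) * ε * l2norm μ f * l2norm μ h := by
        refine mul_le_mul_of_nonneg_right (mul_le_mul_of_nonneg_left h2 ?_) hl2h
        positivity

lemma junta_ES (μ : (∀ i, V i) → ℝ) (S : Finset (Fin k)) (f : (∀ i, V i) → ℝ) :
    Junta S (ES μ S f) := by
  intro x y hxy
  unfold ES
  refine Finset.sum_congr rfl fun T hT => ?_
  rw [Aop_junta μ T f x y fun i hi => hxy i (Finset.mem_powerset.mp hT hi)]

lemma sum_ES (μ : (∀ i, V i) → ℝ) (T₀ : Finset (Fin k)) (f : (∀ i, V i) → ℝ)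
    (x : ∀ i, V i) :
    ∑ S ∈ T₀.powerset, ES μ S f x = Aop μ T₀ f x := by
  unfold ES
  have step1 : ∀ S ∈ T₀.powerset,
      (∑ T ∈ S.powerset, (-1:ℝ) ^ (S.card - T.card) * Aop μ T f x)
      = ∑ T ∈ T₀.powerset,
          if T ⊆ S then (-1:ℝ) ^ (S.card - T.card) * Aop μ T f x else 0 := by
    intro S hS
    have hset : T₀.powerset.filter (fun T => T ⊆ S) = S.powerset := by
      ext T
      simp only [Finset.mem_filter, Finset.mem_powerset]
      exact ⟨fun hh => hh.2, fun hh => ⟨hh.trans (Finset.mem_powerset.mp hS), hh⟩⟩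
    rw [← Finset.sum_filter, hset]
  rw [Finset.sum_congr rfl step1, Finset.sum_comm]
  have step2 : ∀ T ∈ T₀.powerset,
      (∑ S ∈ T₀.powerset, if T ⊆ S then (-1:ℝ) ^ (S.card - T.card) * Aop μ T f x else 0)
      = (∑ S ∈ T₀.powerset, if T ⊆ S then (-1:ℝ) ^ (S.card - T.card) else 0) * Aop μ T f x := by
    intro T _
    rw [Finset.sum_mul]
    refine Finset.sum_congr rfl fun S _ => ?_
    split_ifs with hTS
    · rfl
    · rw [zero_mul]
  have step3 : ∀ T ∈ T₀.powerset,
      (∑ S ∈ T₀.powerset, if T ⊆ S then (-1:ℝ) ^ (S.card - T.card) else 0)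
      = if T = T₀ then 1 else 0 := by
    intro T hT
    have hTsub : T ⊆ T₀ := Finset.mem_powerset.mp hT
    rw [← Finset.sum_filter]
    have hre : ∑ S ∈ T₀.powerset.filter (fun S => T ⊆ S), (-1:ℝ) ^ (S.card - T.card)
        = ∑ U ∈ (T₀ \ T).powerset, (-1:ℝ) ^ U.card := by
      refine Finset.sum_nbij' (fun S => S \ T) (fun U => T ∪ U) ?_ ?_ ?_ ?_ ?_
      · intro S hS
        simp only [Finset.mem_filter, Finset.mem_powerset] at hS
        exact Finset.mem_powerset.mpr (Finset.sdiff_subset_sdiff hS.1 Finset.Subset.rfl)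
      · intro U hU
        simp only [Finset.mem_powerset] at hU
        simp only [Finset.mem_filter, Finset.mem_powerset]
        exact ⟨Finset.union_subset hTsub (hU.trans Finset.sdiff_subset),
          Finset.subset_union_left⟩
      · intro S hS
        simp only [Finset.mem_filter, Finset.mem_powerset] at hS
        exact Finset.union_sdiff_of_subset hS.2
      · intro U hU
        simp only [Finset.mem_powerset] at hU
        have hdisj : Disjoint T U :=
          Finset.disjoint_of_subset_right hU Finset.disjoint_sdiff
        exact Finset.union_sdiff_cancel_left hdisj
      · intro S hS
        simp only [Finset.mem_filter, Finset.mem_powerset] at hS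
        congr 1
        rw [Finset.card_sdiff_of_subset hS.2]
    rw [hre]
    have hint : (∑ U ∈ (T₀ \ T).powerset, (-1:ℝ) ^ U.card)
        = ((∑ U ∈ (T₀ \ T).powerset, (-1:ℤ) ^ U.card : ℤ) : ℝ) := by
      push_cast
      rfl
    rw [hint, Finset.sum_powerset_neg_one_pow_card]
    by_cases he : T₀ \ T = ∅
    · have : T = T₀ := by
        have h1 : T₀ ⊆ T := by
          intro a ha
          by_contra hna
          exact (Finset.notMem_empty a) (he ▸ Finset.mem_sdiff.mpr ⟨ha, hna⟩)
        exact Finset.Subset.antisymm hTsub h1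
      rw [if_pos he, if_pos this]
      norm_num
    · have : T ≠ T₀ := by
        intro e
        exact he (by rw [e, Finset.sdiff_self])
      rw [if_neg he, if_neg this]
      norm_num
  rw [Finset.sum_congr rfl (fun T hT => by rw [step2 T hT, step3 T hT])]
  have : ∀ T ∈ T₀.powerset, (if T = T₀ then (1:ℝ) else 0) * Aop μ T f x
      = if T = T₀ then Aop μ T₀ f x else 0 := by
    intro T _
    split_ifs with he
    · rw [he, one_mul]
    · rw [zero_mul]
  rw [Finset.sum_congr rfl this, Finset.sum_ite_eq' T₀.powerset T₀ (fun T => Aop μ T₀ f x),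
    if_pos (Finset.mem_powerset.mpr Finset.Subset.rfl)]

lemma ES_pair (μ : (∀ i, V i) → ℝ) (f : (∀ i, V i) → ℝ) {S : Finset (Fin k)} {i : Fin k}
    (hiS : i ∈ S) (x : ∀ i, V i) :
    ES μ S f x = ∑ Q ∈ (S.erase i).powerset,
      (-1:ℝ) ^ (S.card - Q.card) * (Aop μ Q f x - Aop μ (insert i Q) f x) := by
  unfold ES
  have hSP : S.powerset = (insert i (S.erase i)).powerset := by
    rw [Finset.insert_erase hiS]
  rw [hSP, Finset.sum_powerset_insert (Finset.notMem_erase i S), ← Finset.sum_add_distrib]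
  refine Finset.sum_congr rfl fun Q hQ => ?_
  have hQsub : Q ⊆ S.erase i := Finset.mem_powerset.mp hQ
  have hiQ : i ∉ Q := fun hm => Finset.notMem_erase i S (hQsub hm)
  have hcard : (insert i Q).card = Q.card + 1 := Finset.card_insert_of_notMem hiQ
  have hQlt : Q.card < S.card := by
    have h1 : Q.card ≤ (S.erase i).card := Finset.card_le_card hQsub
    have h2 : (S.erase i).card < S.card := Finset.card_erase_lt_of_mem hiS
    omega
  have ha : S.card - Q.card = (S.card - (insert i Q).card) + 1 := by omega
  rw [ha, pow_succ]
  ring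

lemma ES_inner_junta (hμ : IsProb μ) (hε : 0 ≤ ε) (hpr : EpsProduct μ ε)
    {R S : Finset (Fin k)} (hRS : R ⊆ S) (hne : R ≠ S) (f h : (∀ i, V i) → ℝ)
    (hh : Junta R h) :
    |inner' μ (ES μ S f) h| ≤
      2 ^ S.card * ((R.card : ℝ) * ε * l2norm μ f * l2norm μ h) := by
  have hss : R ⊂ S := Finset.ssubset_iff_subset_ne.mpr ⟨hRS, hne⟩
  obtain ⟨i, hiS, hiR⟩ := Finset.exists_of_ssubset hss
  have hESfun : ES μ S f = fun x => ∑ Q ∈ (S.erase i).powerset,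
      (-1:ℝ) ^ (S.card - Q.card) * (Aop μ Q f x - Aop μ (insert i Q) f x) :=
    funext fun x => ES_pair μ f hiS x
  rw [inner'_comm, hESfun, inner'_sum_right]
  have hterm : ∀ Q ∈ (S.erase i).powerset,
      |inner' μ h (fun x => (-1:ℝ) ^ (S.card - Q.card) *
        (Aop μ Q f x - Aop μ (insert i Q) f x))| ≤
      (R.card : ℝ) * ε * l2norm μ f * l2norm μ h := by
    intro Q hQ
    have hiQ : i ∉ Q := fun hm => Finset.notMem_erase i S (Finset.mem_powerset.mp hQ hm)
    have hkey := key_bound hμ hε hpr R Q i hiR hiQ f h hh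
    rw [inner'_smul_right, abs_mul, abs_pow, abs_neg, abs_one, one_pow, one_mul,
      inner'_comm]
    calc |inner' μ (fun x => Aop μ Q f x - Aop μ (insert i Q) f x) h|
        ≤ (R.card : ℝ) * ε * l2norm μ f * l2norm μ h := hkey
      _ = (R.card : ℝ) * ε * l2norm μ f * l2norm μ h := rfl
  calc |∑ Q ∈ (S.erase i).powerset, inner' μ h (fun x => (-1:ℝ) ^ (S.card - Q.card) *
        (Aop μ Q f x - Aop μ (insert i Q) f x))|
      ≤ ∑ Q ∈ (S.erase i).powerset, |inner' μ h (fun x => (-1:ℝ) ^ (S.card - Q.card) *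
          (Aop μ Q f x - Aop μ (insert i Q) f x))| := Finset.abs_sum_le_sum_abs _ _
    _ ≤ ∑ _Q ∈ (S.erase i).powerset, (R.card : ℝ) * ε * l2norm μ f * l2norm μ h :=
        Finset.sum_le_sum hterm
    _ = ((S.erase i).powerset.card : ℝ) * ((R.card : ℝ) * ε * l2norm μ f * l2norm μ h) := by
        rw [Finset.sum_const, nsmul_eq_mul]
    _ ≤ 2 ^ S.card * ((R.card : ℝ) * ε * l2norm μ f * l2norm μ h) := by
        refine mul_le_mul_of_nonneg_right ?_
          (mul_nonneg (mul_nonneg (mul_nonneg (Nat.cast_nonneg _) hε) l2norm_nonneg)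
            l2norm_nonneg)
        rw [Finset.card_powerset]
        have h1 : (S.erase i).card ≤ S.card := Finset.card_le_card (Finset.erase_subset i S)
        calc ((2 ^ (S.erase i).card : ℕ) : ℝ) = 2 ^ (S.erase i).card := by push_cast; rfl
          _ ≤ 2 ^ S.card := by
              exact pow_le_pow_right₀ (by norm_num) h1

lemma per_S_bound (hμ : IsProb μ) (hε : 0 ≤ ε) (hpr : EpsProduct μ ε)
    (S : Finset (Fin k)) (f g : (∀ i, V i) → ℝ) :
    |inner' μ (ES μ S f) g - inner' μ (ES μ S f) (ES μ S g)| ≤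
      2 ^ S.card * 2 ^ S.card * S.card * ε * l2norm μ f * l2norm μ g := by
  set φ := ES μ S f with hφ
  have hjφ : Junta S φ := junta_ES μ S f
  have e1 : inner' μ φ (Aop μ S g) = inner' μ φ g := by
    rw [← Aop_adjoint μ S φ g, inner'_comm μ (Aop μ S φ) g,
      inner'_congr_right hμ.1 (fun x hx => Aop_junta_fix hjφ (ne_of_gt (marg_pos hμ.1 hx))) g,
      inner'_comm μ g φ]
  have hBnd : ∀ R ∈ S.powerset.erase S,
      |(-1:ℝ) ^ (S.card - R.card) * inner' μ φ (Aop μ R g)| ≤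
      2 ^ S.card * ((S.card : ℝ) * ε * l2norm μ f * l2norm μ g) := by
    intro R hR
    have hRS : R ⊆ S := Finset.mem_powerset.mp (Finset.mem_of_mem_erase hR)
    have hne : R ≠ S := Finset.ne_of_mem_erase hR
    rw [abs_mul, abs_pow, abs_neg, abs_one, one_pow, one_mul]
    refine le_trans (ES_inner_junta hμ hε hpr hRS hne f (Aop μ R g) (Aop_junta μ R g)) ?_
    refine mul_le_mul_of_nonneg_left ?_ (by positivity)
    have h1 : (R.card : ℝ) ≤ S.card := by exact_mod_cast Finset.card_le_card hRS
    have h2 : l2norm μ (Aop μ R g) ≤ l2norm μ g := l2norm_Aop_le hμ R g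
    have hf0 : (0:ℝ) ≤ l2norm μ f := l2norm_nonneg
    have hg0 : (0:ℝ) ≤ l2norm μ (Aop μ R g) := l2norm_nonneg
    refine mul_le_mul (mul_le_mul_of_nonneg_right
      (mul_le_mul_of_nonneg_right h1 hε) hf0) h2 hg0 ?_
    exact mul_nonneg (mul_nonneg (Nat.cast_nonneg _) hε) hf0
  have habs : |inner' μ φ g - inner' μ φ (ES μ S g)| ≤
      ∑ R ∈ S.powerset.erase S,
        |(-1:ℝ) ^ (S.card - R.card) * inner' μ φ (Aop μ R g)| := by
    have e2 : inner' μ φ (ES μ S g) = ∑ R ∈ S.powerset,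
        (-1:ℝ) ^ (S.card - R.card) * inner' μ φ (Aop μ R g) := by
      have hfun : ES μ S g = fun x => ∑ R ∈ S.powerset,
          (-1:ℝ) ^ (S.card - R.card) * Aop μ R g x := rfl
      rw [hfun, inner'_sum_right]
      exact Finset.sum_congr rfl fun R _ => inner'_smul_right μ φ (Aop μ R g) _
    have e3 : inner' μ φ g - inner' μ φ (ES μ S g)
        = -∑ R ∈ S.powerset.erase S,
            (-1:ℝ) ^ (S.card - R.card) * inner' μ φ (Aop μ R g) := by
      rw [e2, ← Finset.add_sum_erase S.powerset
        (fun R => (-1:ℝ) ^ (S.card - R.card) * inner' μ φ (Aop μ R g))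
        (Finset.mem_powerset.mpr Finset.Subset.rfl), ← e1, Nat.sub_self, pow_zero, one_mul]
      ring
    rw [e3, abs_neg]
    exact Finset.abs_sum_le_sum_abs _ _
  refine le_trans habs (le_trans (Finset.sum_le_sum hBnd) ?_)
  rw [Finset.sum_const, nsmul_eq_mul]
  have hE : (0:ℝ) ≤ (S.card : ℝ) * ε * l2norm μ f * l2norm μ g :=
    mul_nonneg (mul_nonneg (mul_nonneg (Nat.cast_nonneg _) hε) l2norm_nonneg) l2norm_nonneg
  have hcard : ((S.powerset.erase S).card : ℝ) ≤ 2 ^ S.card := by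
    have h1 : (S.powerset.erase S).card ≤ S.powerset.card := Finset.card_erase_le
    rw [Finset.card_powerset] at h1
    calc ((S.powerset.erase S).card : ℝ) ≤ ((2 ^ S.card : ℕ) : ℝ) := by exact_mod_cast h1
      _ = 2 ^ S.card := by push_cast; rfl
  calc ((S.powerset.erase S).card : ℝ) *
        (2 ^ S.card * ((S.card : ℝ) * ε * l2norm μ f * l2norm μ g))
      ≤ 2 ^ S.card * (2 ^ S.card * ((S.card : ℝ) * ε * l2norm μ f * l2norm μ g)) := by
        refine mul_le_mul_of_nonneg_right hcard ?_
        exact mul_nonneg (by positivity) hE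
    _ = 2 ^ S.card * 2 ^ S.card * S.card * ε * l2norm μ f * l2norm μ g := by ring


end Aux

theorem statement15 (k : ℕ) (hk : 1 ≤ k)
    (V : Fin k → Type) [∀ i, Fintype (V i)] [∀ i, DecidableEq (V i)]
    (μ : (∀ i, V i) → ℝ) (ε : ℝ) (hε : 0 ≤ ε) (hμ : IsProb μ) (hprod : EpsProduct μ ε)
    (f g : (∀ i, V i) → ℝ) :
    (|inner' μ f g -
          ∑ S ∈ (univ : Finset (Fin k)).powerset, inner' μ (ES μ S f) (ES μ S g)| ≤
        2 ^ (4 * k) * ε * l2norm μ f * l2norm μ g) ∧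
      ∀ T : Finset (Fin k), Junta T f →
        |inner' μ f g - ∑ S ∈ T.powerset, inner' μ (ES μ S f) (ES μ S g)| ≤
          2 ^ (4 * T.card) * ε * l2norm μ f * l2norm μ g := by
  have l2f : (0:ℝ) ≤ l2norm μ f := l2norm_nonneg
  have l2g : (0:ℝ) ≤ l2norm μ g := l2norm_nonneg
  have hE : (0:ℝ) ≤ ε * l2norm μ f * l2norm μ g := mul_nonneg (mul_nonneg hε l2f) l2g
  have main : ∀ T : Finset (Fin k), Junta T f →
      |inner' μ f g - ∑ S ∈ T.powerset, inner' μ (ES μ S f) (ES μ S g)| ≤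
        2 ^ (4 * T.card) * ε * l2norm μ f * l2norm μ g := by
    intro T hT
    have hdecomp : inner' μ f g = ∑ S ∈ T.powerset, inner' μ (ES μ S f) g := by
      have hfix : ∀ x, 0 < μ x → f x = ∑ S ∈ T.powerset, ES μ S f x := by
        intro x hx
        rw [sum_ES μ T f x]
        exact (Aop_junta_fix hT (ne_of_gt (marg_pos hμ.1 hx))).symm
      calc inner' μ f g = inner' μ g f := inner'_comm μ f g
        _ = inner' μ g (fun x => ∑ S ∈ T.powerset, ES μ S f x) :=
            inner'_congr_right hμ.1 hfix g
        _ = ∑ S ∈ T.powerset, inner' μ g (ES μ S f) := inner'_sum_right μ g _ _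
        _ = ∑ S ∈ T.powerset, inner' μ (ES μ S f) g :=
            Finset.sum_congr rfl fun S _ => inner'_comm μ g (ES μ S f)
    rw [hdecomp, ← Finset.sum_sub_distrib]
    have hperS : ∀ S ∈ T.powerset,
        |inner' μ (ES μ S f) g - inner' μ (ES μ S f) (ES μ S g)| ≤
        (2:ℝ) ^ T.card * 2 ^ T.card * T.card * ε * l2norm μ f * l2norm μ g := by
      intro S hS
      have hSc : S.card ≤ T.card := Finset.card_le_card (Finset.mem_powerset.mp hS)
      refine le_trans (per_S_bound hμ hε hprod S f g) ?_
      have h2 : (2:ℝ) ^ S.card ≤ 2 ^ T.card := pow_le_pow_right₀ one_le_two hSc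
      have hc : ((S.card : ℝ)) ≤ T.card := by exact_mod_cast hSc
      calc (2:ℝ) ^ S.card * 2 ^ S.card * S.card * ε * l2norm μ f * l2norm μ g
          = ((2:ℝ) ^ S.card * 2 ^ S.card * S.card) * (ε * l2norm μ f * l2norm μ g) := by
            ring
        _ ≤ ((2:ℝ) ^ T.card * 2 ^ T.card * T.card) * (ε * l2norm μ f * l2norm μ g) := by
            refine mul_le_mul_of_nonneg_right ?_ hE
            refine mul_le_mul (mul_le_mul h2 h2 (by positivity) (by positivity)) hc
              (Nat.cast_nonneg _) (by positivity)
        _ = (2:ℝ) ^ T.card * 2 ^ T.card * T.card * ε * l2norm μ f * l2norm μ g := by ring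
    calc |∑ S ∈ T.powerset, (inner' μ (ES μ S f) g - inner' μ (ES μ S f) (ES μ S g))|
        ≤ ∑ S ∈ T.powerset,
            |inner' μ (ES μ S f) g - inner' μ (ES μ S f) (ES μ S g)| :=
          Finset.abs_sum_le_sum_abs _ _
      _ ≤ ∑ _S ∈ T.powerset,
            (2:ℝ) ^ T.card * 2 ^ T.card * T.card * ε * l2norm μ f * l2norm μ g :=
          Finset.sum_le_sum hperS
      _ = (T.powerset.card : ℝ) *
            ((2:ℝ) ^ T.card * 2 ^ T.card * T.card * ε * l2norm μ f * l2norm μ g) := by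
          rw [Finset.sum_const, nsmul_eq_mul]
      _ = (2:ℝ) ^ T.card *
            ((2:ℝ) ^ T.card * 2 ^ T.card * T.card * ε * l2norm μ f * l2norm μ g) := by
          rw [Finset.card_powerset]
          norm_num
      _ ≤ 2 ^ (4 * T.card) * ε * l2norm μ f * l2norm μ g := by
          have htle : ((T.card : ℕ) : ℝ) ≤ 2 ^ T.card := by
            exact_mod_cast (Nat.lt_two_pow_self (n := T.card)).le
          have h4 : (2:ℝ) ^ (4 * T.card) = 2 ^ T.card * 2 ^ T.card * 2 ^ T.card * 2 ^ T.card := by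
            rw [show 4 * T.card = T.card + (T.card + (T.card + T.card)) by ring,
              pow_add, pow_add, pow_add]
            ring
          calc (2:ℝ) ^ T.card *
                ((2:ℝ) ^ T.card * 2 ^ T.card * T.card * ε * l2norm μ f * l2norm μ g)
              = ((2:ℝ) ^ T.card * 2 ^ T.card * 2 ^ T.card * T.card) *
                  (ε * l2norm μ f * l2norm μ g) := by ring
            _ ≤ ((2:ℝ) ^ T.card * 2 ^ T.card * 2 ^ T.card * 2 ^ T.card) *
                  (ε * l2norm μ f * l2norm μ g) := by
                refine mul_le_mul_of_nonneg_right ?_ hE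
                exact mul_le_mul_of_nonneg_left htle (by positivity)
            _ = 2 ^ (4 * T.card) * ε * l2norm μ f * l2norm μ g := by rw [h4]; ring
  refine ⟨?_, main⟩
  have hu := main Finset.univ (fun x y hh => by
    have hxy : x = y := funext fun i => hh i (Finset.mem_univ i)
    rw [hxy])
  have hcard : (Finset.univ : Finset (Fin k)).card = k := by
    rw [Finset.card_univ, Fintype.card_fin]
  rwa [hcard] at hu

end GLL
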